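/- arXiv:1507.01329 — 3 statements merged into one kernel-verified Lean document; each statement's English description precedes it below -/
import Mathlib

section
/- With ν = 2∑_{j=1}^n θ^{2j-1}θ^{2j} in the exterior algebra on θ^1,…,θ^{2n} over ℂ, and t an invertible even variable, consider the element (t^2 + ν)^{1/2+k} := t^{2k+1}(1 + ν/t^2)^{1/2+k} ∈ ℂ[t, t^{-1}] ⊗ Λ, expanded by the (finite, by nilpotency of ν) binomial series. If k < n, then the coefficient of t^{2(k-n)+1} in this expansion equals (1/n!)·∏_{j=0}^{n-1}(1/2 + k - j)·ν^n, which is nonzero; hence (t^2+ν)^{1/2+k} does not lie in ℂ[t] ⊗ Λ. -/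
open ExteriorAlgebra LaurentPolynomial

private lemma aux_list_prod_mul {R : Type*} [Ring R] (e : ℕ → R)
    (h2 : ∀ i, e i * e i = 0) (hc : ∀ i j, Commute (e i) (e j)) :
    ∀ m, ∀ i < m, ((List.range m).map e).prod * e i = 0 := by
  intro m
  induction m with
  | zero => intro i hi; omega
  | succ m ih =>
    intro i hi
    rw [List.range_succ, List.map_append, List.prod_append, List.map_singleton,
      List.prod_singleton]
    rcases eq_or_lt_of_le (Nat.lt_succ_iff.mp hi) with h | h
    · subst h; rw [mul_assoc, h2 i, mul_zero]
    · rw [mul_assoc, (hc m i).eq, ← mul_assoc, ih i h, zero_mul]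

private lemma aux_sum_pow {R : Type*} [Ring R] (e : ℕ → R)
    (h2 : ∀ i, e i * e i = 0) (hc : ∀ i j, Commute (e i) (e j)) :
    ∀ m, (∑ j ∈ Finset.range m, e j) ^ m
      = m.factorial • ((List.range m).map e).prod := by
  intro m
  induction m with
  | zero => simp
  | succ m ih =>
    have hcom : Commute (∑ j ∈ Finset.range m, e j) (e m) :=
      Commute.sum_left _ _ _ fun i _ => hc i m
    rw [Finset.sum_range_succ, hcom.add_pow]
    rw [Finset.sum_range_succ, Finset.sum_range_succ]
    have hz : ∀ i ∈ Finset.range m,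
        (∑ j ∈ Finset.range m, e j) ^ i * e m ^ (m + 1 - i) *
          ((m+1).choose i : R) = 0 := by
      intro i hi
      rw [Finset.mem_range] at hi
      have : m + 1 - i = 2 + (m - 1 - i) := by omega
      rw [this, pow_add, pow_two, h2, zero_mul, mul_zero, zero_mul]
    rw [Finset.sum_eq_zero hz, zero_add]
    have hS1 : (∑ j ∈ Finset.range m, e j) ^ (m + 1) = 0 := by
      rw [pow_succ, ih, smul_mul_assoc, Finset.mul_sum]
      rw [Finset.sum_eq_zero fun i hi =>
        aux_list_prod_mul e h2 hc m i (Finset.mem_range.mp hi), smul_zero]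
    rw [hS1, zero_mul, zero_mul, add_zero, Nat.choose_succ_self_right]
    simp only [Nat.add_sub_cancel_left, pow_one, ih]
    rw [List.range_succ, List.map_append, List.prod_append, List.map_singleton,
      List.prod_singleton, Nat.factorial_succ]
    rw [smul_mul_assoc, ← (Nat.cast_commute (m+1)
      (m.factorial • ((List.map e (List.range m)).prod * e m))).eq,
      ← nsmul_eq_mul, smul_smul]

private lemma aux_prod_pairs {M : Type*} [Monoid M] (g : ℕ → M) :
    ∀ n, ((List.range (2*n)).map g).prod
      = ((List.range n).map fun j => g (2*j) * g (2*j+1)).prod := by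
  intro n
  induction n with
  | zero => simp
  | succ n ih =>
    have h : 2 * (n+1) = (2*n + 1) + 1 := by omega
    rw [h, List.range_succ, List.range_succ, List.map_append, List.map_append,
      List.prod_append, List.prod_append, List.map_singleton, List.map_singleton,
      List.prod_singleton, List.prod_singleton, ih]
    rw [List.range_succ, List.map_append, List.prod_append, List.map_singleton,
      List.prod_singleton, mul_assoc]

private lemma aux_ofFn_prod {M : Type*} [Monoid M] {m : ℕ} (f : Fin m → M) (g : ℕ → M)
    (h : ∀ i : Fin m, g i = f i) :
    (List.ofFn f).prod = ((List.range m).map g).prod := by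
  have hr : (List.finRange m).map (fun i : Fin m => (i : ℕ)) = List.range m :=
    List.ext_getElem (by simp) (by simp)
  rw [List.ofFn_eq_map, ← hr, List.map_map]
  congr 1
  exact List.map_congr_left fun i _ => (h i).symm

private noncomputable def Θaux (n : ℕ) : ℕ → ExteriorAlgebra ℂ (Fin (2*n) → ℂ) :=
  fun i => if h : i < 2*n then ExteriorAlgebra.ι ℂ (Pi.single (⟨i, h⟩ : Fin (2*n)) (1:ℂ)) else 0

private noncomputable def Eaux (n : ℕ) : ℕ → ExteriorAlgebra ℂ (Fin (2*n) → ℂ) :=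
  fun j => Θaux n (2*j) * Θaux n (2*j+1)

private lemma Θaux_eq (n : ℕ) (i : Fin (2*n)) :
    Θaux n i = ExteriorAlgebra.ι ℂ (Pi.single i (1:ℂ)) := by
  rw [Θaux, dif_pos i.isLt]

private lemma Θaux_sq (n i : ℕ) : Θaux n i * Θaux n i = 0 := by
  by_cases h : i < 2*n
  · rw [Θaux, dif_pos h, ι_sq_zero]
  · rw [Θaux, dif_neg h, zero_mul]

private lemma Θaux_anti (n i j : ℕ) : Θaux n i * Θaux n j = -(Θaux n j * Θaux n i) := by
  by_cases hi : i < 2*n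
  · by_cases hj : j < 2*n
    · simp only [Θaux, dif_pos hi, dif_pos hj]
      exact eq_neg_of_add_eq_zero_left (ι_add_mul_swap _ _)
    · simp only [Θaux, dif_neg hj]; simp
  · simp only [Θaux, dif_neg hi]; simp

private lemma Θaux_comm (n a c d : ℕ) :
    Commute (Θaux n a) (Θaux n c * Θaux n d) := by
  show _ = _
  calc Θaux n a * (Θaux n c * Θaux n d) = (Θaux n a * Θaux n c) * Θaux n d := by
        rw [mul_assoc]
    _ = (-(Θaux n c * Θaux n a)) * Θaux n d := by rw [Θaux_anti n a c]
    _ = -(Θaux n c * (Θaux n a * Θaux n d)) := by rw [neg_mul, mul_assoc]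
    _ = -(Θaux n c * (-(Θaux n d * Θaux n a))) := by rw [Θaux_anti n a d]
    _ = (Θaux n c * Θaux n d) * Θaux n a := by rw [mul_neg, neg_neg, mul_assoc]

private lemma Eaux_sq (n : ℕ) : ∀ j, Eaux n j * Eaux n j = 0 := by
  intro j
  rw [Eaux]
  calc Θaux n (2*j) * Θaux n (2*j+1) * (Θaux n (2*j) * Θaux n (2*j+1))
      = Θaux n (2*j) * (Θaux n (2*j+1) * (Θaux n (2*j) * Θaux n (2*j+1))) := by
        rw [mul_assoc]
    _ = Θaux n (2*j) * ((Θaux n (2*j) * Θaux n (2*j+1)) * Θaux n (2*j+1)) := by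
        rw [(Θaux_comm n (2*j+1) (2*j) (2*j+1)).eq]
    _ = 0 := by rw [mul_assoc, Θaux_sq, mul_zero, mul_zero]

private lemma Eaux_comm (n : ℕ) : ∀ i j, Commute (Eaux n i) (Eaux n j) :=
  fun i j => Commute.mul_left (Θaux_comm n (2*i) (2*j) (2*j+1))
    (Θaux_comm n (2*i+1) (2*j) (2*j+1))

private lemma aux_pow_val (n : ℕ) :
    (∑ j ∈ Finset.range n, Eaux n j) ^ n =
      n.factorial • ιMulti ℂ (2*n) (fun i => Pi.single i (1:ℂ)) := by
  rw [aux_sum_pow (Eaux n) (Eaux_sq n) (Eaux_comm n) n]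
  congr 1
  rw [show (Eaux n) = fun j => Θaux n (2*j) * Θaux n (2*j+1) from rfl,
    ← aux_prod_pairs (Θaux n) n,
    ← aux_ofFn_prod (fun i : Fin (2*n) => ExteriorAlgebra.ι ℂ (Pi.single i (1:ℂ)))
      (Θaux n) (fun i => Θaux_eq n i), ← ιMulti_apply]

private lemma aux_iotaMulti_ne_zero (n : ℕ) :
    ιMulti ℂ (2*n) (fun i : Fin (2*n) => Pi.single i (1:ℂ)) ≠ 0 := by
  classical
  intro h
  have h2 := congrArg (liftAlternating (R := ℂ)
    (Function.update (fun i => (0 : (Fin (2*n) → ℂ) [⋀^Fin i]→ₗ[ℂ] ℂ)) (2*n)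
      ((Pi.basisFun ℂ (Fin (2*n))).det))) h
  rw [liftAlternating_apply_ιMulti, map_zero, Function.update_self] at h2
  have hb : (fun i : Fin (2*n) => Pi.single i (1:ℂ)) = ⇑(Pi.basisFun ℂ (Fin (2*n))) := by
    funext i; rw [Pi.basisFun_apply]
  rw [hb, Module.Basis.det_self] at h2
  exact one_ne_zero h2

private lemma aux_nu_pow (n : ℕ)
    (θ : Fin (2 * n) → ExteriorAlgebra ℂ (Fin (2 * n) → ℂ))
    (hθ : ∀ i, θ i = ExteriorAlgebra.ι ℂ (Pi.single i (1 : ℂ)))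
    (ν : ExteriorAlgebra ℂ (Fin (2 * n) → ℂ))
    (hν : ν = ∑ j : Fin n, (2 : ℂ) •
      (θ ⟨2 * (j : ℕ), by omega⟩ * θ ⟨2 * (j : ℕ) + 1, by omega⟩)) :
    ν ^ n ≠ 0 := by
  have hν2 : ν = (2:ℂ) • ∑ j ∈ Finset.range n, Eaux n j := by
    rw [hν, Finset.smul_sum, ← Fin.sum_univ_eq_sum_range (fun j => (2:ℂ) • Eaux n j) n]
    refine Finset.sum_congr rfl fun j _ => ?_
    congr 1
    rw [hθ, hθ, Eaux, Θaux_eq n ⟨2 * (j : ℕ), by omega⟩, Θaux_eq n ⟨2 * (j : ℕ) + 1, by omega⟩]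
  rw [hν2, smul_pow, aux_pow_val n, ← Nat.cast_smul_eq_nsmul ℂ, smul_smul]
  refine smul_ne_zero ?_ (aux_iotaMulti_ne_zero n)
  exact mul_ne_zero (pow_ne_zero _ two_ne_zero)
    (Nat.cast_ne_zero.mpr (Nat.factorial_ne_zero n))

/-- In `ℂ[t,t⁻¹] ⊗ Λ` (modelled as Laurent polynomials over the exterior algebra
`Λ` on `θ^1,…,θ^{2n}`), the element `(t²+ν)^{1/2+k} = t^{2k+1}(1+ν/t²)^{1/2+k}` expanded by the
finite binomial series has, for `k < n`, coefficient `(1/n!)∏_{j=0}^{n-1}(1/2+k-j)·ν^n ≠ 0` at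
`t^{2(k-n)+1}`; hence it does not lie in `ℂ[t] ⊗ Λ`. -/
theorem super_pfaffian_singular (n k : ℕ) (hk : k < n)
    (θ : Fin (2 * n) → ExteriorAlgebra ℂ (Fin (2 * n) → ℂ))
    (hθ : ∀ i, θ i = ExteriorAlgebra.ι ℂ (Pi.single i (1 : ℂ)))
    (ν : ExteriorAlgebra ℂ (Fin (2 * n) → ℂ))
    (hν : ν = ∑ j : Fin n, (2 : ℂ) •
      (θ ⟨2 * (j : ℕ), by omega⟩ * θ ⟨2 * (j : ℕ) + 1, by omega⟩))
    (S : LaurentPolynomial (ExteriorAlgebra ℂ (Fin (2 * n) → ℂ)))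
    (hS : S = ∑ ℓ ∈ Finset.range (n + 1),
      C (((1 / (Nat.factorial ℓ : ℂ)) *
          ∏ j ∈ Finset.range ℓ, ((1 : ℂ) / 2 + k - j)) • ν ^ ℓ) *
        T (2 * (k : ℤ) + 1 - 2 * (ℓ : ℤ))) :
    S.coeff (2 * ((k : ℤ) - (n : ℤ)) + 1) =
        ((1 / (Nat.factorial n : ℂ)) * ∏ j ∈ Finset.range n, ((1 : ℂ) / 2 + k - j)) • ν ^ n ∧
      S.coeff (2 * ((k : ℤ) - (n : ℤ)) + 1) ≠ 0 ∧
      S ∉ Set.range (Polynomial.toLaurent (R := ExteriorAlgebra ℂ (Fin (2 * n) → ℂ))) := by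
  classical
  have hd : S.coeff (2 * ((k : ℤ) - (n : ℤ)) + 1) =
      ((1 / (Nat.factorial n : ℂ)) * ∏ j ∈ Finset.range n, ((1 : ℂ) / 2 + k - j)) • ν ^ n := by
    rw [hS]
    simp_rw [← single_eq_C_mul_T]
    rw [AddMonoidAlgebra.coeff_sum]
    simp only [AddMonoidAlgebra.coeff_single]
    rw [Finset.sum_apply']
    rw [Finset.sum_eq_single_of_mem n (Finset.self_mem_range_succ n)]
    · rw [Finsupp.single_apply, if_pos (by omega)]
    · intro ℓ _ hne
      rw [Finsupp.single_apply, if_neg (by omega)]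
  have hcne : ((1 / (Nat.factorial n : ℂ)) *
      ∏ j ∈ Finset.range n, ((1:ℂ)/2 + k - j)) ≠ 0 := by
    apply mul_ne_zero
    · exact one_div_ne_zero (Nat.cast_ne_zero.mpr (Nat.factorial_ne_zero n))
    · refine Finset.prod_ne_zero_iff.mpr fun j _ => fun h => ?_
      have h1 : ((1 + 2*k : ℕ) : ℂ) = ((2*j : ℕ) : ℂ) := by
        push_cast
        linear_combination 2*h
      have h2 : 1 + 2*k = 2*j := Nat.cast_injective h1
      omega
  have hne : S.coeff (2 * ((k : ℤ) - (n : ℤ)) + 1) ≠ 0 := by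
    rw [hd]
    exact smul_ne_zero hcne (aux_nu_pow n θ hθ ν hν)
  refine ⟨hd, hne, ?_⟩
  rintro ⟨p, hp⟩
  have hmem : (2 * ((k : ℤ) - (n : ℤ)) + 1) ∈ S.coeff.support := Finsupp.mem_support_iff.mpr hne
  rw [← hp, toLaurent_support] at hmem
  obtain ⟨a, _, ha⟩ := Finset.mem_map.mp hmem
  have : (a : ℤ) = 2 * ((k : ℤ) - (n : ℤ)) + 1 := ha
  omega
end

section
/- Let Λ_s be the exterior algebra over ℂ on generators θ^μ_t (1 ≤ μ ≤ 2n, 1 ≤ t ≤ s), and set φ_{ts} = ∑_{μ,ν} θ^μ_t (η^{-1})_{μν} θ^ν_s where η is the standard symplectic matrix. Then each φ_{ts} is an even element of Λ_s, φ_{ts} = φ_{st}, and the φ_{tt} are nonzero with φ_{tt}^n ≠ 0 and φ_{tt}^{n+1} = 0. -/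
open ExteriorAlgebra

set_option maxHeartbeats 1000000

private theorem aux_pow_succ' {A : Type*} [Ring A] (x y : A) (h2 : x * x = 0)
    (hc : Commute x y) : ∀ m : ℕ, (x + y) ^ (m + 1) = y ^ (m + 1) + (m + 1 : ℕ) • (x * y ^ m)
  | 0 => by simp [add_comm]
  | (m + 1) => by
    have ih := aux_pow_succ' x y h2 hc m
    have hpow : Commute x (y ^ (m + 1)) := hc.pow_right (m + 1)
    have hx0 : x * y ^ m * x = 0 := by
      rw [mul_assoc, ← (hc.pow_right m).eq, ← mul_assoc, h2, zero_mul]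
    calc (x + y) ^ (m + 1 + 1) = (x + y) ^ (m + 1) * (x + y) := pow_succ _ _
      _ = (y ^ (m + 1) + (m + 1 : ℕ) • (x * y ^ m)) * (x + y) := by rw [ih]
      _ = (y ^ (m + 1) * x + y ^ (m + 1) * y) + (m + 1 : ℕ) • (x * y ^ m * x + x * y ^ m * y) := by
            rw [add_mul, mul_add, smul_mul_assoc, mul_add]
      _ = (x * y ^ (m + 1) + y ^ (m + 1 + 1)) + (m + 1 : ℕ) • (x * y ^ (m + 1)) := by
            rw [hx0, zero_add, ← hpow.eq, ← pow_succ, mul_assoc, ← pow_succ]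
      _ = y ^ (m + 1 + 1) + (m + 1 + 1 : ℕ) • (x * y ^ (m + 1)) := by
            simp only [succ_nsmul]; abel

private theorem aux_list_pow' {A : Type*} [Ring A] : ∀ (L : List A),
    L.Pairwise Commute → (∀ a ∈ L, a * a = 0) →
    L.sum ^ L.length = (Nat.factorial L.length) • L.prod ∧ L.sum ^ (L.length + 1) = 0
  | [] => by intro _ _; simp
  | (a :: L) => by
    intro hp hsq
    rw [List.pairwise_cons] at hp
    obtain ⟨ha, hp⟩ := hp
    obtain ⟨ih1, ih2⟩ := aux_list_pow' L hp (fun b hb => hsq b (List.mem_cons_of_mem a hb))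
    have hca : Commute a L.sum := Commute.list_sum_right _ _ ha
    have ha2 : a * a = 0 := hsq a List.mem_cons_self
    constructor
    · rw [List.sum_cons, List.length_cons, aux_pow_succ' a L.sum ha2 hca, ih2, zero_add, ih1,
        mul_smul_comm, smul_smul, List.prod_cons, Nat.factorial_succ]
    · rw [List.sum_cons, List.length_cons, aux_pow_succ' a L.sum ha2 hca]
      have h0 : L.sum ^ (L.length + 1 + 1) = 0 := by rw [pow_succ, ih2, zero_mul]
      rw [h0, ih2, mul_zero, smul_zero, add_zero]

private theorem aux_interleave' {A : Type*} [Monoid A] :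
    ∀ (m : ℕ) (w : Fin (2 * m) → A),
      (List.ofFn fun k : Fin m =>
        w ⟨2 * (k : ℕ), by omega⟩ * w ⟨2 * (k : ℕ) + 1, by omega⟩).prod
        = (List.ofFn w).prod
  | 0, w => by simp
  | (m + 1), w => by
    have ih := aux_interleave' m (fun j : Fin (2 * m) => w ⟨(j : ℕ) + 2, by omega⟩)
    rw [List.ofFn_succ, List.prod_cons]
    rw [show (List.ofFn w) = w 0 :: w 1 :: List.ofFn (fun j : Fin (2 * m) =>
        w ⟨(j : ℕ) + 2, by omega⟩) from ?_]
    · rw [List.prod_cons, List.prod_cons, ← ih, ← mul_assoc]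
      congr 1
    · rw [List.ofFn_succ (f := w), List.ofFn_succ]
      congr 1

private theorem aux_ne_zero' (n s : ℕ) (hn : 1 ≤ n) (t : Fin s) :
    (List.ofFn fun k : Fin n =>
      ι ℂ (Pi.single ((⟨(k : ℕ), by omega⟩ : Fin (2 * n)), t) (1 : ℂ) :
          Fin (2 * n) × Fin s → ℂ) *
      ι ℂ (Pi.single ((⟨(k : ℕ) + n, by omega⟩ : Fin (2 * n)), t) (1 : ℂ) :
          Fin (2 * n) × Fin s → ℂ)).prod ≠ 0 := by
  set M' := (Fin (2 * n) × Fin s → ℂ) with hM'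
  let σ : Equiv.Perm (Fin (2 * n)) :=
    { toFun := fun j => if h : (j : ℕ) % 2 = 0 then ⟨(j : ℕ) / 2, by omega⟩
        else ⟨(j : ℕ) / 2 + n, by omega⟩
      invFun := fun μ => if h : (μ : ℕ) < n then ⟨2 * (μ : ℕ), by omega⟩
        else ⟨2 * ((μ : ℕ) - n) + 1, by omega⟩
      left_inv := by
        intro j
        beta_reduce
        by_cases h : (j : ℕ) % 2 = 0
        · rw [dif_pos h, dif_pos (show ((⟨(j : ℕ) / 2, by omega⟩ : Fin (2 * n)) : ℕ) < n by
            show (j : ℕ) / 2 < n; omega)]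
          exact Fin.ext (show 2 * ((j : ℕ) / 2) = (j : ℕ) by omega)
        · rw [dif_neg h, dif_neg (show ¬((⟨(j : ℕ) / 2 + n, by omega⟩ : Fin (2 * n)) : ℕ) < n by
            show ¬((j : ℕ) / 2 + n < n); omega)]
          exact Fin.ext (show 2 * ((j : ℕ) / 2 + n - n) + 1 = (j : ℕ) by omega)
      right_inv := by
        intro μ
        beta_reduce
        by_cases h : (μ : ℕ) < n
        · rw [dif_pos h, dif_pos (show ((⟨2 * (μ : ℕ), by omega⟩ : Fin (2 * n)) : ℕ) % 2 = 0 by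
            show 2 * (μ : ℕ) % 2 = 0; omega)]
          exact Fin.ext (show 2 * (μ : ℕ) / 2 = (μ : ℕ) by omega)
        · rw [dif_neg h, dif_neg (show ¬((⟨2 * ((μ : ℕ) - n) + 1, by omega⟩ : Fin (2 * n)) : ℕ)
              % 2 = 0 by show ¬((2 * ((μ : ℕ) - n) + 1) % 2 = 0); omega)]
          exact Fin.ext (show (2 * ((μ : ℕ) - n) + 1) / 2 + n = (μ : ℕ) by omega) }
  let v : Fin (2 * n) → M' := fun j => Pi.single (σ j, t) (1 : ℂ)
  have hlist : (List.ofFn fun k : Fin n =>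
      ι ℂ (Pi.single ((⟨(k : ℕ), by omega⟩ : Fin (2 * n)), t) (1 : ℂ)) *
      ι ℂ (Pi.single ((⟨(k : ℕ) + n, by omega⟩ : Fin (2 * n)), t) (1 : ℂ))).prod
      = ιMulti ℂ (2 * n) v := by
    rw [ιMulti_apply, ← aux_interleave' n (fun j => ι ℂ (v j))]
    refine congrArg List.prod (congrArg List.ofFn (funext fun k => ?_))
    have e1 : σ ⟨2 * (k : ℕ), by omega⟩ = ⟨(k : ℕ), by omega⟩ := by
      show dite _ _ _ = _
      rw [dif_pos (show ((⟨2 * (k : ℕ), by omega⟩ : Fin (2 * n)) : ℕ) % 2 = 0 by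
        show 2 * (k : ℕ) % 2 = 0; omega)]
      exact Fin.ext (show 2 * (k : ℕ) / 2 = (k : ℕ) by omega)
    have e2 : σ ⟨2 * (k : ℕ) + 1, by omega⟩ = ⟨(k : ℕ) + n, by omega⟩ := by
      show dite _ _ _ = _
      rw [dif_neg (show ¬((⟨2 * (k : ℕ) + 1, by omega⟩ : Fin (2 * n)) : ℕ) % 2 = 0 by
        show ¬((2 * (k : ℕ) + 1) % 2 = 0); omega)]
      exact Fin.ext (show (2 * (k : ℕ) + 1) / 2 + n = (k : ℕ) + n by omega)
    have hv1 : v ⟨2 * (k : ℕ), by omega⟩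
        = (Pi.single ((⟨(k : ℕ), by omega⟩ : Fin (2 * n)), t) 1 : M') :=
      congrArg (fun z => (Pi.single (z, t) 1 : M')) e1
    have hv2 : v ⟨2 * (k : ℕ) + 1, by omega⟩
        = (Pi.single ((⟨(k : ℕ) + n, by omega⟩ : Fin (2 * n)), t) 1 : M') :=
      congrArg (fun z => (Pi.single (z, t) 1 : M')) e2
    exact (congrArg₂ (· * ·) (congrArg (ι ℂ) hv1) (congrArg (ι ℂ) hv2)).symm
  rw [hlist]
  let A : M' [⋀^Fin (2 * n)]→ₗ[ℂ] ℂ :=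
    (Matrix.detRowAlternating : (Fin (2 * n) → ℂ) [⋀^Fin (2 * n)]→ₗ[ℂ] ℂ).compLinearMap
      (LinearMap.funLeft ℂ ℂ (fun μ : Fin (2 * n) => (μ, t)))
  let f : ∀ i : ℕ, M' [⋀^Fin i]→ₗ[ℂ] ℂ :=
    Function.update (fun i => (0 : M' [⋀^Fin i]→ₗ[ℂ] ℂ)) (2 * n) A
  intro hzero
  have hF := congrArg (liftAlternating (R := ℂ) (M := M') f) hzero
  rw [map_zero, liftAlternating_apply_ιMulti] at hF
  have hfA : f (2 * n) = A := Function.update_self _ _ _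
  rw [hfA] at hF
  have hAv : A v = Matrix.det (σ.permMatrix ℂ) := by
    have h0 : A v = Matrix.det (Matrix.of fun j μ => v j (μ, t)) := rfl
    rw [h0]
    congr 1
    ext j μ
    show v j (μ, t) = σ.toPEquiv.toMatrix j μ
    rw [PEquiv.toMatrix_toPEquiv_eq, Matrix.submatrix_apply, Matrix.one_apply]
    have hv : v j (μ, t) = if (μ, t) = (σ j, t) then (1 : ℂ) else 0 := Pi.single_apply _ _ _
    rw [hv]
    simp [Prod.ext_iff, eq_comm]
  rw [hAv, Matrix.det_permutation] at hF
  rcases Int.units_eq_one_or (Equiv.Perm.sign σ) with h | h <;> rw [h] at hF <;> simp at hF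



private theorem aux_inv' (n : ℕ) (hn : 1 ≤ n)
    (η : Matrix (Fin (2 * n)) (Fin (2 * n)) ℂ)
    (hη : η = Matrix.of fun μ ν : Fin (2 * n) =>
      if (μ : ℕ) + n = (ν : ℕ) then (1 : ℂ)
      else if (ν : ℕ) + n = (μ : ℕ) then (-1 : ℂ) else 0) :
    η⁻¹ = -η := by
  have hsq : η * (-η) = 1 := by
    subst hη
    ext μ ν
    rw [Matrix.mul_apply]
    by_cases h : (μ : ℕ) < n
    · rw [Finset.sum_eq_single_of_mem (⟨(μ : ℕ) + n, by omega⟩ : Fin (2 * n))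
        (Finset.mem_univ _)]
      · have hk0 : ((⟨(μ : ℕ) + n, by omega⟩ : Fin (2 * n)) : ℕ) = (μ : ℕ) + n := rfl
        simp only [Matrix.of_apply, Matrix.neg_apply, Matrix.one_apply, hk0, Fin.ext_iff]
        split_ifs <;> first | omega | norm_num
      · intro k _ hk
        have hk' : (k : ℕ) ≠ (μ : ℕ) + n := by simpa [Fin.ext_iff] using hk
        simp only [Matrix.of_apply, Matrix.neg_apply]
        split_ifs <;> first | omega | norm_num
    · rw [Finset.sum_eq_single_of_mem (⟨(μ : ℕ) - n, by omega⟩ : Fin (2 * n))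
        (Finset.mem_univ _)]
      · have hk0 : ((⟨(μ : ℕ) - n, by omega⟩ : Fin (2 * n)) : ℕ) = (μ : ℕ) - n := rfl
        simp only [Matrix.of_apply, Matrix.neg_apply, Matrix.one_apply, hk0, Fin.ext_iff]
        split_ifs <;> first | omega | norm_num
      · intro k _ hk
        have hk' : (k : ℕ) ≠ (μ : ℕ) - n := by simpa [Fin.ext_iff] using hk
        simp only [Matrix.of_apply, Matrix.neg_apply]
        split_ifs <;> first | omega | norm_num
  exact Matrix.inv_eq_right_inv hsq

private theorem aux_swap' (n s : ℕ) (a b : Fin (2 * n) × Fin s → ℂ) :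
    ι ℂ a * ι ℂ b = -(ι ℂ b * ι ℂ a) :=
  eq_neg_of_add_eq_zero_left (ι_add_mul_swap a b)

private theorem aux_swap_mid' (n s : ℕ) (a b : Fin (2 * n) × Fin s → ℂ)
    (z : ExteriorAlgebra ℂ (Fin (2 * n) × Fin s → ℂ)) :
    ι ℂ a * (ι ℂ b * z) = -(ι ℂ b * (ι ℂ a * z)) := by
  rw [← mul_assoc, aux_swap' n s a b, neg_mul, mul_assoc]

private theorem aux_comm' (n s : ℕ) (a b c d : Fin (2 * n) × Fin s → ℂ) :
    (ι ℂ a * ι ℂ b) * (ι ℂ c * ι ℂ d) = (ι ℂ c * ι ℂ d) * (ι ℂ a * ι ℂ b) := by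
  calc (ι ℂ a * ι ℂ b) * (ι ℂ c * ι ℂ d) = ι ℂ a * (ι ℂ b * (ι ℂ c * ι ℂ d)) := by
        rw [mul_assoc]
    _ = -(ι ℂ a * (ι ℂ c * (ι ℂ b * ι ℂ d))) := by rw [aux_swap_mid' n s b c (ι ℂ d), mul_neg]
    _ = ι ℂ c * (ι ℂ a * (ι ℂ b * ι ℂ d)) := by
        rw [aux_swap_mid' n s a c (ι ℂ b * ι ℂ d), neg_neg]
    _ = -(ι ℂ c * (ι ℂ a * (ι ℂ d * ι ℂ b))) := by rw [aux_swap' n s b d, mul_neg, mul_neg]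
    _ = ι ℂ c * (ι ℂ d * (ι ℂ a * ι ℂ b)) := by
        rw [aux_swap_mid' n s a d (ι ℂ b), mul_neg, neg_neg]
    _ = (ι ℂ c * ι ℂ d) * (ι ℂ a * ι ℂ b) := by rw [mul_assoc]

private theorem aux_sq0' (n s : ℕ) (a b : Fin (2 * n) × Fin s → ℂ) :
    (ι ℂ a * ι ℂ b) * (ι ℂ a * ι ℂ b) = 0 := by
  calc (ι ℂ a * ι ℂ b) * (ι ℂ a * ι ℂ b) = ι ℂ a * (ι ℂ b * (ι ℂ a * ι ℂ b)) := by
        rw [mul_assoc]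
    _ = -(ι ℂ a * (ι ℂ a * (ι ℂ b * ι ℂ b))) := by rw [aux_swap_mid' n s b a (ι ℂ b), mul_neg]
    _ = 0 := by rw [ι_sq_zero, mul_zero, mul_zero, neg_zero]

private theorem aux_key' (n s : ℕ) (hn : 1 ≤ n)
    (η : Matrix (Fin (2 * n)) (Fin (2 * n)) ℂ)
    (hη : η = Matrix.of fun μ ν : Fin (2 * n) =>
      if (μ : ℕ) + n = (ν : ℕ) then (1 : ℂ)
      else if (ν : ℕ) + n = (μ : ℕ) then (-1 : ℂ) else 0)
    (hinv : η⁻¹ = -η)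
    (θ : Fin (2 * n) → Fin s → ExteriorAlgebra ℂ (Fin (2 * n) × Fin s → ℂ))
    (φ : Fin s → Fin s → ExteriorAlgebra ℂ (Fin (2 * n) × Fin s → ℂ))
    (hφ : ∀ t u : Fin s, φ t u = ∑ μ : Fin (2 * n), ∑ ν : Fin (2 * n),
      (η⁻¹ μ ν) • (θ μ t * θ ν u))
    (t u : Fin s) :
    φ t u = ∑ k : Fin n,
      (-(θ ⟨(k : ℕ), by omega⟩ t * θ ⟨(k : ℕ) + n, by omega⟩ u)
        + θ ⟨(k : ℕ) + n, by omega⟩ t * θ ⟨(k : ℕ), by omega⟩ u) := by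
  have hg : ∀ μ : Fin (2 * n), (∑ ν : Fin (2 * n), (η⁻¹ μ ν) • (θ μ t * θ ν u)) =
      if h : (μ : ℕ) < n then -(θ μ t * θ ⟨(μ : ℕ) + n, by omega⟩ u)
      else θ μ t * θ ⟨(μ : ℕ) - n, by omega⟩ u := by
    intro μ
    rw [hinv, hη]
    by_cases h : (μ : ℕ) < n
    · rw [dif_pos h, Finset.sum_eq_single_of_mem (⟨(μ : ℕ) + n, by omega⟩ : Fin (2 * n))
        (Finset.mem_univ _)]
      · have h1 : (μ : ℕ) + n = ((⟨(μ : ℕ) + n, by omega⟩ : Fin (2 * n)) : ℕ) := rfl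
        simp [← h1]
      · intro ν _ hν
        have hν' : (ν : ℕ) ≠ (μ : ℕ) + n := by simpa [Fin.ext_iff] using hν
        have h1 : (μ : ℕ) + n ≠ (ν : ℕ) := by omega
        have h2 : (ν : ℕ) + n ≠ (μ : ℕ) := by omega
        simp [h1, h2]
    · rw [dif_neg h, Finset.sum_eq_single_of_mem (⟨(μ : ℕ) - n, by omega⟩ : Fin (2 * n))
        (Finset.mem_univ _)]
      · have h1 : ((⟨(μ : ℕ) - n, by omega⟩ : Fin (2 * n)) : ℕ) = (μ : ℕ) - n := rfl
        have h2 : (μ : ℕ) + n ≠ (μ : ℕ) - n := by omega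
        have h3 : ((μ : ℕ) - n) + n = (μ : ℕ) := by omega
        simp [h1, h2, h3]
      · intro ν _ hν
        have hν' : (ν : ℕ) ≠ (μ : ℕ) - n := by simpa [Fin.ext_iff] using hν
        have h1 : (μ : ℕ) + n ≠ (ν : ℕ) := by omega
        have h2 : (ν : ℕ) + n ≠ (μ : ℕ) := by omega
        simp [h1, h2]
  rw [hφ]
  rw [Finset.sum_congr rfl fun μ _ => hg μ]
  rw [← Equiv.sum_comp ((finSumFinEquiv.trans (finCongr (two_mul n).symm)))]
  rw [Fintype.sum_sum_type]
  rw [← Finset.sum_add_distrib]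
  refine Finset.sum_congr rfl fun k _ => ?_
  have e1 : ((finSumFinEquiv.trans (finCongr (two_mul n).symm)) (Sum.inl k) : Fin (2 * n))
      = ⟨(k : ℕ), by omega⟩ := by
    apply Fin.ext; simp
  have e2 : ((finSumFinEquiv.trans (finCongr (two_mul n).symm)) (Sum.inr k) : Fin (2 * n))
      = ⟨n + (k : ℕ), by omega⟩ := by
    apply Fin.ext; simp; omega
  rw [e1, e2]
  dsimp only
  rw [dif_pos (show ((⟨(k : ℕ), by omega⟩ : Fin (2*n)) : ℕ) < n from k.2),
    dif_neg (show ¬((⟨n + (k : ℕ), by omega⟩ : Fin (2*n)) : ℕ) < n by simp)]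
  have h3 : (⟨n + (k : ℕ), by omega⟩ : Fin (2*n)) = ⟨(k:ℕ) + n, by omega⟩ :=
    Fin.ext (by simp [Nat.add_comm])
  have h4 : (⟨n + (k : ℕ) - n, by omega⟩ : Fin (2 * n)) = ⟨(k : ℕ), by omega⟩ :=
    Fin.ext (show n + (k : ℕ) - n = (k : ℕ) by omega)
  exact congrArg₂ (· + ·) rfl (congrArg₂ (· * ·) (congrArg (fun z => θ z t) h3)
    (congrArg (fun z => θ z u) h4))

/-- In the exterior algebra over `ℂ` on generators `θ^μ_t`
(`1 ≤ μ ≤ 2n`, `1 ≤ t ≤ s`), with `η` the standard symplectic matrix, the elements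
`φ_{ts} = ∑_{μ,ν} θ^μ_t (η^{-1})_{μν} θ^ν_s` are even (products of two generators),
symmetric (`φ_{ts} = φ_{st}`), and satisfy `φ_{tt} ≠ 0`, `φ_{tt}^n ≠ 0`, `φ_{tt}^{n+1} = 0`. -/
theorem phi_properties (n s : ℕ) (hn : 1 ≤ n)
    (η : Matrix (Fin (2 * n)) (Fin (2 * n)) ℂ)
    (hη : η = Matrix.of fun μ ν : Fin (2 * n) =>
      if (μ : ℕ) + n = (ν : ℕ) then (1 : ℂ)
      else if (ν : ℕ) + n = (μ : ℕ) then (-1 : ℂ) else 0)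
    (θ : Fin (2 * n) → Fin s → ExteriorAlgebra ℂ (Fin (2 * n) × Fin s → ℂ))
    (hθ : ∀ μ t, θ μ t = ExteriorAlgebra.ι ℂ (Pi.single (μ, t) (1 : ℂ)))
    (φ : Fin s → Fin s → ExteriorAlgebra ℂ (Fin (2 * n) × Fin s → ℂ))
    (hφ : ∀ t u : Fin s, φ t u = ∑ μ : Fin (2 * n), ∑ ν : Fin (2 * n),
      (η⁻¹ μ ν) • (θ μ t * θ ν u)) :
    (∀ t u : Fin s, φ t u ∈
        LinearMap.range (ExteriorAlgebra.ι ℂ (M := Fin (2 * n) × Fin s → ℂ)) *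
          LinearMap.range (ExteriorAlgebra.ι ℂ (M := Fin (2 * n) × Fin s → ℂ))) ∧
      (∀ t u : Fin s, φ t u = φ u t) ∧
      (∀ t : Fin s, φ t t ≠ 0) ∧
      (∀ t : Fin s, φ t t ^ n ≠ 0) ∧
      (∀ t : Fin s, φ t t ^ (n + 1) = 0) := by
  have hinv : η⁻¹ = -η := aux_inv' n hn η hη
  have key := aux_key' n s hn η hη hinv θ φ hφ
  -- φ t t as a scalar multiple of a sum of commuting square-zero elements
  have hphitt : ∀ t : Fin s, φ t t = (-2 : ℂ) • (List.ofFn (fun k : Fin n =>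
      ι ℂ (Pi.single ((⟨(k : ℕ), by omega⟩ : Fin (2 * n)), t) (1 : ℂ) :
          Fin (2 * n) × Fin s → ℂ) *
      ι ℂ (Pi.single ((⟨(k : ℕ) + n, by omega⟩ : Fin (2 * n)), t) (1 : ℂ) :
          Fin (2 * n) × Fin s → ℂ))).sum := by
    intro t
    rw [key t t, List.sum_ofFn, Finset.smul_sum]
    refine Finset.sum_congr rfl fun k _ => ?_
    rw [hθ, hθ,
      aux_swap' n s (Pi.single ((⟨(k : ℕ) + n, by omega⟩ : Fin (2 * n)), t) (1 : ℂ))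
        (Pi.single ((⟨(k : ℕ), by omega⟩ : Fin (2 * n)), t) (1 : ℂ)),
      neg_smul, two_smul, neg_add]
  have hpow : ∀ t : Fin s, φ t t ^ n ≠ 0 ∧ φ t t ^ (n + 1) = 0 := by
    intro t
    set L := List.ofFn (fun k : Fin n =>
      ι ℂ (Pi.single ((⟨(k : ℕ), by omega⟩ : Fin (2 * n)), t) (1 : ℂ) :
          Fin (2 * n) × Fin s → ℂ) *
      ι ℂ (Pi.single ((⟨(k : ℕ) + n, by omega⟩ : Fin (2 * n)), t) (1 : ℂ) :
          Fin (2 * n) × Fin s → ℂ)) with hL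
    have hpair : L.Pairwise Commute := by
      rw [hL, List.pairwise_ofFn]
      intro i j _
      exact aux_comm' n s _ _ _ _
    have hsq : ∀ a ∈ L, a * a = 0 := by
      intro a ha
      rw [hL, List.mem_ofFn] at ha
      obtain ⟨k, rfl⟩ := ha
      exact aux_sq0' n s _ _
    obtain ⟨h1, h2⟩ := aux_list_pow' L hpair hsq
    have hlen : L.length = n := by rw [hL, List.length_ofFn]
    rw [hlen] at h1 h2
    have hprod : L.prod ≠ 0 := aux_ne_zero' n s hn t
    constructor
    · rw [hphitt t, smul_pow, h1, ← Nat.cast_smul_eq_nsmul ℂ, smul_smul]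
      exact smul_ne_zero
        (mul_ne_zero (pow_ne_zero _ (by norm_num))
          (Nat.cast_ne_zero.mpr (Nat.factorial_ne_zero n))) hprod
    · rw [hphitt t, smul_pow, h2, smul_zero]
  refine ⟨?_, ?_, fun t h0 => (hpow t).1 (by rw [h0, zero_pow (by omega)]),
    fun t => (hpow t).1, fun t => (hpow t).2⟩
  · -- evenness
    intro t u
    rw [hφ]
    refine Submodule.sum_mem _ fun μ _ => Submodule.sum_mem _ fun ν _ => ?_
    rw [hθ, hθ, ← smul_mul_assoc]
    exact Submodule.mul_mem_mul
      ⟨η⁻¹ μ ν • (Pi.single (μ, t) 1 : Fin (2 * n) × Fin s → ℂ), map_smul _ _ _⟩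
      ⟨(Pi.single (ν, u) 1 : Fin (2 * n) × Fin s → ℂ), rfl⟩
  · -- symmetry
    intro t u
    rw [key t u, key u t]
    refine Finset.sum_congr rfl fun k _ => ?_
    rw [hθ, hθ, hθ, hθ,
      aux_swap' n s (Pi.single ((⟨(k : ℕ), by omega⟩ : Fin (2 * n)), t) (1 : ℂ))
        (Pi.single ((⟨(k : ℕ) + n, by omega⟩ : Fin (2 * n)), u) (1 : ℂ)),
      aux_swap' n s (Pi.single ((⟨(k : ℕ) + n, by omega⟩ : Fin (2 * n)), t) (1 : ℂ))
        (Pi.single ((⟨(k : ℕ), by omega⟩ : Fin (2 * n)), u) (1 : ℂ))]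
    abel
end

section
/- Let Q̃(k) denote the adjugate of the k×k matrix Q(k) = (q_{ij}) with q_{ij} = ∑_a x^a_i x^a_j in the polynomial ring, and E_{rj} the polarization operators. Then E_{jj}(Q̃(k)_{jj}) = 0 and E_{rj}(Q̃(k)_{rj}) = -Q̃(k)_{jj} for all r ≠ j, r ≤ k. -/
open MvPolynomial

lemma my_deriv_prod {R A : Type*} [CommRing R] [CommRing A] [Algebra R A]
    (D : Derivation R A A) {ι : Type*} [DecidableEq ι] (s : Finset ι) (f : ι → A) :
    D (∏ i ∈ s, f i) = ∑ i ∈ s, D (f i) * ∏ j ∈ s.erase i, f j := by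
  induction s using Finset.induction with
  | empty => simp
  | @insert a s ha ih =>
    rw [Finset.prod_insert ha, D.leibniz, ih, Finset.sum_insert ha,
      Finset.erase_insert ha, smul_eq_mul, smul_eq_mul, Finset.mul_sum, add_comm,
      mul_comm (∏ j ∈ s, f j)]
    congr 1
    refine Finset.sum_congr rfl fun i hi => ?_
    rw [Finset.erase_insert_of_ne (by rintro rfl; exact ha hi),
      Finset.prod_insert (by simp [ha, Finset.mem_erase])]
    ring

lemma my_deriv_det {R A : Type*} [CommRing R] [CommRing A] [Algebra R A]
    {n : ℕ} (D : Derivation R A A) (M : Matrix (Fin n) (Fin n) A) :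
    D M.det = ∑ j, (M.updateCol j (fun i => D (M i j))).det := by
  have key : ∀ (v : Fin n → A) (j : Fin n), (M.updateCol j v).det
      = ∑ σ : Equiv.Perm (Fin n), Equiv.Perm.sign σ •
          (v (σ j) * ∏ i ∈ Finset.univ.erase j, M (σ i) i) := by
    intro v j
    rw [Matrix.det_apply]
    refine Finset.sum_congr rfl fun σ _ => ?_
    congr 1
    rw [← Finset.mul_prod_erase Finset.univ _ (Finset.mem_univ j)]
    congr 1
    · simp [Matrix.updateCol_apply]
    · exact Finset.prod_congr rfl fun i hi => by
        simp [Matrix.updateCol_apply, (Finset.mem_erase.mp hi).1]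
  rw [Matrix.det_apply, map_sum]
  simp_rw [key]
  rw [Finset.sum_comm]
  refine Finset.sum_congr rfl fun σ _ => ?_
  have : ∀ (z : ℤ) (x : A), D (z • x) = z • D x := fun z x => by
    rw [← Derivation.coeFn_coe, D.toLinearMap.map_smul_of_tower]
  simp only [Units.smul_def]
  rw [this, my_deriv_prod D, Finset.smul_sum]

/-- With `Q(k)` the Gram matrix `q_{ij} = ∑_a x^a_i x^a_j`, `Q̃(k)` its adjugate
and `E_{rj} = ∑_a x^a_r ∂_{aj}` the polarization operators, one has
`E_{jj}(Q̃(k)_{jj}) = 0` and `E_{rj}(Q̃(k)_{rj}) = -Q̃(k)_{jj}` for `r ≠ j`. -/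
theorem polarization_on_adjugate (m N k : ℕ) (hk : k ≤ N)
    (q : Fin N → Fin N → MvPolynomial (Fin m × Fin N) ℂ)
    (hq : ∀ t s : Fin N, q t s = ∑ a : Fin m, X (a, t) * X (a, s))
    (Q : Matrix (Fin k) (Fin k) (MvPolynomial (Fin m × Fin N) ℂ))
    (hQ : Q = Matrix.of fun i j : Fin k => q (Fin.castLE hk i) (Fin.castLE hk j))
    (E : Fin N → Fin N → MvPolynomial (Fin m × Fin N) ℂ → MvPolynomial (Fin m × Fin N) ℂ)
    (hE : ∀ s t f, E s t f = ∑ a : Fin m, X (a, s) * pderiv (a, t) f) :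
    (∀ j : Fin k, E (Fin.castLE hk j) (Fin.castLE hk j) (Q.adjugate j j) = 0) ∧
    (∀ r j : Fin k, r ≠ j →
      E (Fin.castLE hk r) (Fin.castLE hk j) (Q.adjugate r j) = -Q.adjugate j j) := by
  classical
  -- the polarization operators as derivations
  set D : Fin N → Fin N → Derivation ℂ (MvPolynomial (Fin m × Fin N) ℂ) (MvPolynomial (Fin m × Fin N) ℂ) :=
    fun s t => ∑ a : Fin m, (X (a, s) : MvPolynomial (Fin m × Fin N) ℂ) •
      (pderiv (a, t) : Derivation ℂ (MvPolynomial (Fin m × Fin N) ℂ)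
        (MvPolynomial (Fin m × Fin N) ℂ)) with hD
  have hED : ∀ s t f, E s t f = D s t f := by
    intro s t f
    rw [hE, hD]
    have h1 : ⇑(∑ a : Fin m, (X (a, s) : MvPolynomial (Fin m × Fin N) ℂ) •
        (pderiv (a, t) : Derivation ℂ (MvPolynomial (Fin m × Fin N) ℂ)
          (MvPolynomial (Fin m × Fin N) ℂ)))
        = ∑ a : Fin m, ⇑((X (a, s) : MvPolynomial (Fin m × Fin N) ℂ) •
            (pderiv (a, t) : Derivation ℂ (MvPolynomial (Fin m × Fin N) ℂ)
              (MvPolynomial (Fin m × Fin N) ℂ))) :=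
      map_sum Derivation.coeFnAddMonoidHom _ _
    rw [h1, Finset.sum_apply]
    exact Finset.sum_congr rfl fun a _ => by
      rw [Derivation.coe_smul, Pi.smul_apply, smul_eq_mul]
  -- action on the variables
  have hDX : ∀ (s t : Fin N) (b : Fin m) (u : Fin N),
      D s t (X (b, u)) = if u = t then X (b, s) else 0 := by
    intro s t b u
    rw [← hED, hE]
    simp only [pderiv_X]
    rcases eq_or_ne u t with rfl | h
    · rw [Finset.sum_eq_single b]
      · simp
      · intro a _ hab
        simp [Prod.ext_iff, hab]
      · simp
    · simp [Prod.ext_iff, Ne.symm h, h]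
  -- action on the entries q
  have hDq : ∀ (s t u v : Fin N), D s t (q u v)
      = (if u = t then q s v else 0) + (if v = t then q u s else 0) := by
    intro s t u v
    rw [hq u v, map_sum]
    have : ∀ a : Fin m, D s t (X (a, u) * X (a, v))
        = X (a, u) * (if v = t then X (a, s) else 0)
          + X (a, v) * (if u = t then X (a, s) else 0) := by
      intro a
      rw [Derivation.leibniz, hDX, hDX, smul_eq_mul, smul_eq_mul]
    simp only [this]
    rw [Finset.sum_add_distrib]
    by_cases hu : u = t <;> by_cases hv : v = t <;>
      simp [hu, hv, hq, mul_comm]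
  -- common computation
  have main : ∀ r j : Fin k,
      E (Fin.castLE hk r) (Fin.castLE hk j) (Q.adjugate r j)
        = ((Q.updateRow j (Pi.single r 1)).updateCol j
            (fun t => if t = j then 0 else
              q (Fin.castLE hk t) (Fin.castLE hk r))).det := by
    intro r j
    set A := Q.updateRow j (Pi.single r 1) with hA
    rw [Matrix.adjugate_apply, hED, my_deriv_det]
    have hDA : ∀ t s : Fin k, D (Fin.castLE hk r) (Fin.castLE hk j) (A t s)
        = if s = j ∧ t ≠ j then q (Fin.castLE hk t) (Fin.castLE hk r) else 0 := by
      intro t s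
      by_cases ht : t = j
      · rw [hA, ht, Matrix.updateRow_self]
        by_cases hs : s = r
        · rw [hs, Pi.single_eq_same, Derivation.map_one_eq_zero]
          simp [ht]
        · simp [Pi.single_eq_of_ne hs, ht]
      · rw [hA, Matrix.updateRow_ne ht, hQ]
        rw [Matrix.of_apply, hDq]
        simp only [Fin.castLE_inj]
        by_cases hs : s = j <;> simp [ht, hs]
    have hsum : ∑ s, (A.updateCol s
          (fun i => D (Fin.castLE hk r) (Fin.castLE hk j) (A i s))).det
        = (A.updateCol j
            (fun i => D (Fin.castLE hk r) (Fin.castLE hk j) (A i j))).det := by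
      apply Finset.sum_eq_single_of_mem j (Finset.mem_univ j)
      intro s _ hs
      apply Matrix.det_eq_zero_of_column_eq_zero s
      intro t
      rw [Matrix.updateCol_self, hDA]
      simp [hs]
    rw [hsum]
    have hfun : (fun i => D (Fin.castLE hk r) (Fin.castLE hk j) (A i j))
        = fun t => if t = j then 0 else
            q (Fin.castLE hk t) (Fin.castLE hk r) := by
      funext t
      rw [hDA]
      by_cases ht : t = j <;> simp [ht]
    rw [hfun]
  constructor
  · -- diagonal case
    intro j
    rw [main j j]
    apply Matrix.det_eq_zero_of_row_eq_zero j
    intro s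
    rw [Matrix.updateCol_apply]
    split
    · next h => simp [h]
    · next h =>
      rw [Matrix.updateRow_self]
      exact Pi.single_eq_of_ne h 1
  · -- off-diagonal case
    intro r j hrj
    rw [main r j]
    set A := Q.updateRow j (Pi.single r 1) with hA
    set v : Fin k → MvPolynomial (Fin m × Fin N) ℂ :=
      fun t => if t = j then 0 else q (Fin.castLE hk t) (Fin.castLE hk r) with hv
    have hsplit : (fun t => A t r) = v + Pi.single j 1 := by
      funext t
      by_cases ht : t = j <;>
        simp [hA, hv, Matrix.updateRow_apply, Pi.single_apply, ht, hQ]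
    have h0 : (A.updateCol j (fun t => A t r)).det = 0 :=
      Matrix.det_updateCol_eq_zero hrj
    rw [hsplit, Matrix.det_updateCol_add] at h0
    have hv0 : (A.updateCol j v).det
        = -(A.updateCol j (Pi.single j 1)).det :=
      eq_neg_of_add_eq_zero_left h0
    rw [hv0, neg_inj]
    -- det (A.updateColumn j e_j) = adjugate Q j j
    rw [Matrix.adjugate_apply]
    -- rearrange
    have hB : A.updateCol j (Pi.single j 1)
        = (Q.updateCol j (Pi.single j 1)).updateRow j
            (Pi.single j 1 + Pi.single r 1) := by
      funext t s
      by_cases ht : t = j <;> by_cases hs : s = j <;>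
        simp [hA, Matrix.updateCol_apply, Matrix.updateRow_apply,
          Pi.single_apply, ht, hs, Ne.symm hrj]
    rw [hB, Matrix.det_updateRow_add]
    have hz : ((Q.updateCol j (Pi.single j 1)).updateRow j
        (Pi.single r 1)).det = 0 := by
      apply Matrix.det_eq_zero_of_column_eq_zero j
      intro t
      by_cases ht : t = j
      · rw [ht, Matrix.updateRow_self]
        exact Pi.single_eq_of_ne (Ne.symm hrj) 1
      · rw [Matrix.updateRow_ne ht, Matrix.updateCol_self]
        exact Pi.single_eq_of_ne ht 1
    rw [hz, add_zero]
    -- final: det ((Q.updateColumn j e_j).updateRow j e_j) = det (Q.updateRow j e_j)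
    set A2 := Q.updateRow j (Pi.single j 1) with hA2
    have hC : (Q.updateCol j (Pi.single j 1)).updateRow j (Pi.single j 1)
        = A2.updateCol j (Pi.single j 1) := by
      funext t s
      by_cases ht : t = j <;> by_cases hs : s = j <;>
        simp [hA2, Matrix.updateCol_apply, Matrix.updateRow_apply,
          Pi.single_apply, ht, hs]
    rw [hC]
    have hsplit2 : (fun t => A2 t j)
        = (fun t => if t = j then 0 else Q t j) + Pi.single j 1 := by
      funext t
      by_cases ht : t = j <;>
        simp [hA2, Matrix.updateRow_apply, Pi.single_apply, ht]
    have hz2 : (A2.updateCol j (fun t => if t = j then 0 else Q t j)).det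
        = 0 := by
      apply Matrix.det_eq_zero_of_row_eq_zero j
      intro s
      by_cases hs : s = j
      · rw [hs, Matrix.updateCol_self]
        simp
      · rw [Matrix.updateCol_ne hs, hA2, Matrix.updateRow_self]
        exact Pi.single_eq_of_ne hs 1
    have h2 : A2.det
        = (A2.updateCol j (fun t => if t = j then 0 else Q t j)).det
          + (A2.updateCol j (Pi.single j 1)).det := by
      conv_lhs => rw [← Matrix.updateCol_eq_self A2 j]
      rw [hsplit2, Matrix.det_updateCol_add]
    rw [h2, hz2, zero_add]
end
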